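/- Let E be a finite ground set, let X ⊆ ℝ^E be a nonempty convex set, and let {x_0, …, x_k} ⊆ X be an affine basis of X (an inclusion-wise maximal affinely independent subset of X). For F ⊆ E set A(F) := {x_i − x_0 : i ∈ {1, …, k}} ∪ {χ_e : e ∈ F}, where χ_e denotes the e-th standard unit vector of ℝ^E. Then a set S ⊆ E is an identifying set for X if and only if the family of vectors A(E \ S) is linearly independent. -/

import Mathlib

/-- `S ⊆ E` is identifying for `X ⊆ ℝ^E`: any two distinct members of `X`
differ in some coordinate `e ∈ S`. -/
def Identifying {E : Type*} [Fintype E] (X : Set (E → ℝ)) (S : Set E) : Prop :=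
  ∀ x ∈ X, ∀ y ∈ X, x ≠ y → ∃ e ∈ S, x e ≠ y e

lemma single_mem_span_iff {E : Type*} [Fintype E] [DecidableEq E] (S : Set E) (v : E → ℝ) :
    v ∈ Submodule.span ℝ (Set.range fun e : ↥(Sᶜ) => Pi.single (e : E) (1 : ℝ)) ↔
      ∀ e ∈ S, v e = 0 := by
  constructor
  · intro hv e he
    have hle : Submodule.span ℝ (Set.range fun e : ↥(Sᶜ) => Pi.single (e : E) (1 : ℝ)) ≤
        LinearMap.ker (LinearMap.proj (R := ℝ) (φ := fun _ : E => ℝ) e) := by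
      rw [Submodule.span_le]
      rintro _ ⟨f, rfl⟩
      have hne : (f : E) ≠ e := by
        intro h
        exact f.2 (h ▸ he)
      simp [LinearMap.mem_ker, Pi.single_apply, hne]
    simpa using hle hv
  · intro h
    classical
    have hrepr : v = ∑ e : E, v e • (Pi.single e (1 : ℝ) : E → ℝ) := by
      funext a
      simp [Finset.sum_apply, Pi.single_apply]
    rw [hrepr]
    refine Submodule.sum_mem _ fun e _ => ?_
    by_cases he : e ∈ S
    · simp [h e he]
    · exact Submodule.smul_mem _ _ (Submodule.subset_span ⟨⟨e, he⟩, rfl⟩)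

/-- Let `X ⊆ ℝ^E` be a nonempty convex set and `x 0, …, x k` an affine basis of `X`
(an inclusion-wise maximal affinely independent subset of `X`).  Then `S ⊆ E` is
identifying for `X` iff the family `A(E \ S)`, consisting of the vectors
`x i - x 0` (for `i = 1, …, k`) together with the standard unit vectors `χ_e`
for `e ∈ E \ S`, is linearly independent. -/
theorem stmt2 {E : Type*} [Fintype E] [DecidableEq E] (X : Set (E → ℝ))
    (hX : X.Nonempty) (hconv : Convex ℝ X)
    (k : ℕ) (x : Fin (k + 1) → E → ℝ) (hxX : ∀ i, x i ∈ X)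
    (hindep : AffineIndependent ℝ x)
    (hmax : ∀ y ∈ X, y ∉ Set.range x →
      ¬ AffineIndependent ℝ (Fin.cons y x : Fin (k + 2) → E → ℝ))
    (S : Set E) :
    Identifying X S ↔
      LinearIndependent ℝ
        (Sum.elim (fun i : Fin k => x i.succ - x 0)
          (fun e : ↥(Sᶜ) => Pi.single (e : E) (1 : ℝ))) := by
  classical
  set d : Fin k → E → ℝ := fun i => x i.succ - x 0 with hd
  set σ : ↥(Sᶜ) → E → ℝ := fun e => Pi.single (e : E) (1 : ℝ) with hσ
  -- linear independence of the difference vectors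
  have hli1 : LinearIndependent ℝ d := by
    have h := (affineIndependent_iff_linearIndependent_vsub ℝ x 0).mp hindep
    have := h.comp (fun i : Fin k => (⟨i.succ, Fin.succ_ne_zero i⟩ : {j : Fin (k+1) // j ≠ 0}))
      (fun a b hab => by
        simpa using Fin.succ_injective _ (congrArg Subtype.val hab))
    exact this
  -- linear independence of the unit vectors
  have hli2 : LinearIndependent ℝ σ := by
    have hb := (Pi.basisFun ℝ E).linearIndependent
    have := hb.comp (fun e : ↥(Sᶜ) => (e : E)) Subtype.val_injective
    have heq : σ = (⇑(Pi.basisFun ℝ E)) ∘ fun e : ↥(Sᶜ) => (e : E) := by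
      funext e
      simp [hσ]
    rw [heq]
    exact this
  -- every point of X is in the affine span, so differences lie in span of d
  have hV : ∀ y ∈ X, y - x 0 ∈ Submodule.span ℝ (Set.range d) := by
    intro y hy
    by_cases hr : y ∈ Set.range x
    · obtain ⟨i, rfl⟩ := hr
      refine Fin.cases ?_ (fun j => ?_) i
      · simp
      · exact Submodule.subset_span ⟨j, rfl⟩
    · have hns := hmax y hy hr
      have hy' : y ∈ affineSpan ℝ (Set.range x) := by
        by_contra hy'
        apply hns
        refine AffineIndependent.affineIndependent_of_notMem_span (i := (0 : Fin (k+2)))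
          ?_ ?_
        · have hinj : Function.Injective
              (fun z : {j : Fin (k+2) // j ≠ 0} => (z : Fin (k+2)).pred z.2) := by
            intro a b hab
            apply Subtype.ext
            have := congrArg Fin.succ hab
            rwa [Fin.succ_pred, Fin.succ_pred] at this
          have h := hindep.comp_embedding
            ⟨fun z : {j : Fin (k+2) // j ≠ 0} => (z : Fin (k+2)).pred z.2, hinj⟩
          convert h using 1
          · rfl
          funext z
          obtain ⟨j, hj⟩ := z
          show (Fin.cons y x : Fin (k+2) → E → ℝ) j = x (j.pred hj)
          have h1 : (Fin.cons y x : Fin (k+2) → E → ℝ) ((j.pred hj).succ) = x (j.pred hj) :=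
            Fin.cons_succ _ _ _
          rwa [Fin.succ_pred] at h1
        · have himg : (Fin.cons y x : Fin (k+2) → E → ℝ) '' {z | z ≠ 0} = Set.range x := by
            ext w
            constructor
            · rintro ⟨j, hj, rfl⟩
              refine ⟨j.pred hj, ?_⟩
              have h1 : (Fin.cons y x : Fin (k+2) → E → ℝ) ((j.pred hj).succ) = x (j.pred hj) :=
                Fin.cons_succ _ _ _
              rw [Fin.succ_pred] at h1
              exact h1.symm
            · rintro ⟨i, rfl⟩
              exact ⟨i.succ, Fin.succ_ne_zero i, by simp⟩
          rw [himg, Fin.cons_zero]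
          exact hy'
      have h0 : x 0 ∈ affineSpan ℝ (Set.range x) :=
        mem_affineSpan ℝ ⟨0, rfl⟩
      have hvs : y -ᵥ x 0 ∈ vectorSpan ℝ (Set.range x) := by
        rw [← direction_affineSpan]
        exact AffineSubspace.vsub_mem_direction hy' h0
      rw [vectorSpan_range_eq_span_range_vsub_right ℝ x 0] at hvs
      have hle : Submodule.span ℝ (Set.range fun i : Fin (k+1) => x i -ᵥ x 0) ≤
          Submodule.span ℝ (Set.range d) := by
        rw [Submodule.span_le]
        rintro _ ⟨i, rfl⟩
        refine Fin.cases ?_ (fun j => ?_) i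
        · simp
        · exact Submodule.subset_span ⟨j, rfl⟩
      exact hle hvs
  rw [linearIndependent_sum]
  constructor
  · intro hid
    refine ⟨hli1, hli2, ?_⟩
    rw [Submodule.disjoint_def]
    intro v hvV hvW
    by_contra hv0
    obtain ⟨c, hc⟩ := (Submodule.mem_span_range_iff_exists_fun ℝ).mp hvV
    simp only [Function.comp, Sum.elim_inl] at hc
    set T : ℝ := ∑ i, |c i| with hT
    have hT0 : 0 ≤ T := Finset.sum_nonneg fun i _ => abs_nonneg _
    set t : ℝ := 1 / ((k + 1) * (T + 1)) with ht
    have hk1 : (0:ℝ) < (k:ℝ) + 1 := by positivity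
    have ht0 : 0 < t := by positivity
    have htT : t * (T + 1) = 1 / (k + 1) := by
      field_simp [ht]
      rw [ht]
      field_simp
    have hbound : ∀ b : ℝ, |b| ≤ T → 0 ≤ 1 / ((k:ℝ) + 1) + t * b ∧
        0 ≤ 1 / ((k:ℝ) + 1) - t * b := by
      intro b hb
      have h1 : |t * b| ≤ t * T := by
        rw [abs_mul, abs_of_pos ht0]
        exact mul_le_mul_of_nonneg_left hb ht0.le
      have h2 : t * T < 1 / ((k:ℝ) + 1) := by
        rw [← htT]
        nlinarith
      constructor
      · nlinarith [neg_abs_le (t * b), abs_nonneg (t*b)]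
      · nlinarith [le_abs_self (t * b)]
    have hci : ∀ i, |c i| ≤ T := by
      intro i
      exact Finset.single_le_sum (f := fun i => |c i|) (fun j _ => abs_nonneg _)
        (Finset.mem_univ i)
    have hcs : |∑ i, c i| ≤ T := Finset.abs_sum_le_sum_abs _ _
    set lam : Fin (k+1) → ℝ :=
      Fin.cons (1 / ((k:ℝ) + 1) - t * ∑ i, c i) (fun i => 1 / ((k:ℝ) + 1) + t * c i) with hlam
    set mu : Fin (k+1) → ℝ :=
      Fin.cons (1 / ((k:ℝ) + 1) + t * ∑ i, c i) (fun i => 1 / ((k:ℝ) + 1) - t * c i) with hmu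
    have hlam0 : ∀ i, 0 ≤ lam i := by
      refine Fin.cases ?_ (fun j => ?_)
      · simpa [hlam] using (hbound _ hcs).2
      · simpa [hlam] using (hbound _ (hci j)).1
    have hmu0 : ∀ i, 0 ≤ mu i := by
      refine Fin.cases ?_ (fun j => ?_)
      · simpa [hmu] using (hbound _ hcs).1
      · simpa [hmu] using (hbound _ (hci j)).2
    have hsum1 : ∑ i, lam i = 1 := by
      rw [hlam, Fin.sum_cons]
      rw [Finset.sum_add_distrib, ← Finset.mul_sum]
      simp only [Finset.sum_const, Finset.card_univ, Fintype.card_fin, nsmul_eq_mul]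
      field_simp
      ring
    have hsum2 : ∑ i, mu i = 1 := by
      rw [hmu, Fin.sum_cons]
      rw [Finset.sum_sub_distrib, ← Finset.mul_sum]
      simp only [Finset.sum_const, Finset.card_univ, Fintype.card_fin, nsmul_eq_mul]
      field_simp
      ring
    have hp : (∑ i, lam i • x i) ∈ X :=
      hconv.sum_mem (fun i _ => hlam0 i) hsum1 (fun i _ => hxX i)
    have hq : (∑ i, mu i • x i) ∈ X :=
      hconv.sum_mem (fun i _ => hmu0 i) hsum2 (fun i _ => hxX i)
    have hdiff : (∑ i, lam i • x i) - (∑ i, mu i • x i) = (2 * t) • v := by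
      have hsub : ∀ j : Fin k, lam j.succ - mu j.succ = 2 * t * c j := by
        intro j
        simp only [hlam, hmu, Fin.cons_succ]
        ring
      have h0 : lam 0 - mu 0 = -(2 * t * ∑ i, c i) := by
        simp only [hlam, hmu, Fin.cons_zero]
        ring
      calc (∑ i, lam i • x i) - (∑ i, mu i • x i)
          = ∑ i, (lam i - mu i) • x i := by
            rw [← Finset.sum_sub_distrib]
            simp [sub_smul]
        _ = (lam 0 - mu 0) • x 0 + ∑ j : Fin k, (lam j.succ - mu j.succ) • x j.succ := by
            rw [Fin.sum_univ_succ]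
        _ = -((2 * t * ∑ i, c i) • x 0) + ∑ j : Fin k, (2 * t * c j) • x j.succ := by
            rw [h0, neg_smul]
            congr 1
            exact Finset.sum_congr rfl fun j _ => by rw [hsub j]
        _ = (2 * t) • v := by
            rw [← hc]
            simp only [hd, smul_sub]
            rw [Finset.smul_sum]
            simp only [smul_smul, smul_sub]
            rw [Finset.sum_sub_distrib, ← Finset.sum_smul, Finset.mul_sum]
            abel
    have hne : (∑ i, lam i • x i) ≠ (∑ i, mu i • x i) := by
      intro h
      apply hv0
      have : (2 * t) • v = 0 := by rw [← hdiff, h, sub_self]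
      have h2t : (2 : ℝ) * t ≠ 0 := by positivity
      exact (smul_eq_zero.mp this).resolve_left h2t
    obtain ⟨e, heS, hpe⟩ := hid _ hp _ hq hne
    apply hpe
    have hv_e : v e = 0 := (single_mem_span_iff S v).mp hvW e heS
    have := congrFun hdiff e
    simp only [Pi.sub_apply, Pi.smul_apply, smul_eq_mul, hv_e, mul_zero] at this
    linarith
  · rintro ⟨-, -, hdisj⟩ p hp q hq hne
    by_contra h
    push_neg at h
    have hW : p - q ∈ Submodule.span ℝ (Set.range σ) := by
      rw [hσ, single_mem_span_iff]
      intro e he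
      simp [h e he]
    have hVpq : p - q ∈ Submodule.span ℝ (Set.range d) := by
      have h1 := hV p hp
      have h2 := hV q hq
      have := sub_mem h1 h2
      simpa using this
    have := Submodule.disjoint_def.mp hdisj _ hVpq hW
    exact hne (sub_eq_zero.mp this)
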